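/- Let p be prime, k < p, G = C_p^k with generators x_1,…,x_k, and 𝔽 = 𝔽_p. Let s ∈ 𝔽_p[G] be a skew-symmetric element. If (∏_{1≤i<j≤k}(x_i - x_j)) · s = 0 in 𝔽_p[G], then s = 0. -/

import Mathlib

open MvPolynomial Equiv Finset

namespace SkewVdm

variable {K : Type*} [Field K] {n : ℕ}

noncomputable def collapse (a b : Fin n) :
    MvPolynomial (Fin n) K →ₐ[K] MvPolynomial (Fin n) K :=
  MvPolynomial.aeval (fun l => if l = a then MvPolynomial.X b else MvPolynomial.X l)

lemma collapse_X (a b l : Fin n) :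
    collapse (K := K) a b (X l) = if l = a then X b else X l := by
  simp [collapse]

lemma dvd_sub_collapse (a b : Fin n) (Q : MvPolynomial (Fin n) K) :
    (X a - X b) ∣ Q - collapse a b Q := by
  induction Q using MvPolynomial.induction_on with
  | C r => simp [collapse]
  | add q r hq hr =>
      have := dvd_add hq hr
      rw [map_add]
      have e : q + r - (collapse a b q + collapse a b r)
          = (q - collapse a b q) + (r - collapse a b r) := by ring
      rw [e]; exact this
  | mul_X q l hq =>
      rw [map_mul]
      have e : q * X l - collapse a b q * collapse a b (X l)
          = (q - collapse a b q) * X l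
            + collapse a b q * (X l - collapse a b (X l)) := by ring
      rw [e]
      refine dvd_add (Dvd.dvd.mul_right hq _) (Dvd.dvd.mul_left ?_ _)
      rw [collapse_X]
      by_cases h : l = a
      · subst h; simp
      · simp [h]

lemma X_sub_X_dvd_iff (a b : Fin n) (hab : a ≠ b) (Q : MvPolynomial (Fin n) K) :
    (X a - X b) ∣ Q ↔ collapse (K := K) a b Q = 0 := by
  constructor
  · rintro ⟨R, rfl⟩
    rw [map_mul, map_sub, collapse_X, collapse_X, if_pos rfl, if_neg hab.symm, sub_self, zero_mul]
  · intro h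
    have := dvd_sub_collapse (K := K) a b Q
    rwa [h, sub_zero] at this

lemma prime_X_sub_X (a b : Fin n) (hab : a ≠ b) :
    Prime (X a - X b : MvPolynomial (Fin n) K) := by
  refine ⟨?_, ?_, ?_⟩
  · intro h0
    have h1 := congrArg (MvPolynomial.eval (fun l => if l = a then (1 : K) else 0)) h0
    simp [hab.symm] at h1
  · intro hu
    obtain ⟨R, hR⟩ := hu.exists_right_inv
    have h1 : collapse (K := K) a b ((X a - X b) * R) = 1 := by rw [hR, map_one]
    rw [map_mul, map_sub, collapse_X, collapse_X, if_pos rfl, if_neg hab.symm, sub_self,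
      zero_mul] at h1
    exact one_ne_zero h1.symm
  · intro q r hqr
    rw [X_sub_X_dvd_iff a b hab, map_mul] at hqr
    rcases mul_eq_zero.mp hqr with h | h
    · exact Or.inl ((X_sub_X_dvd_iff a b hab q).mpr h)
    · exact Or.inr ((X_sub_X_dvd_iff a b hab r).mpr h)

lemma not_dvd_pair {a b c d : Fin n} (hab : a < b) (hcd : c < d)
    (hne : (a, b) ≠ (c, d)) :
    ¬ (X a - X b : MvPolynomial (Fin n) K) ∣ (X c - X d) := by
  rintro ⟨R, hR⟩
  -- find a point where X a = X b but X c ≠ X d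
  have key : ∃ v : Fin n → K, v a = v b ∧ v c ≠ v d := by
    by_cases hc : c ≠ a ∧ c ≠ b
    · refine ⟨fun l => if l = c then 1 else 0, ?_, ?_⟩
      · simp [hc.1.symm, hc.2.symm]
      · simp [hcd.ne']
    · have hc' : c = a ∨ c = b := by
        by_cases h : c = a
        · exact Or.inl h
        · push_neg at hc; exact Or.inr (hc h)
      have hd : d ≠ a ∧ d ≠ b := by
        rcases hc' with rfl | rfl
        · exact ⟨hcd.ne', fun h => hne (by rw [h])⟩
        · exact ⟨(hab.trans hcd).ne', hcd.ne'⟩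
      refine ⟨fun l => if l = d then 1 else 0, ?_, ?_⟩
      · simp [hd.1.symm, hd.2.symm]
      · simp [hcd.ne]
  obtain ⟨v, hv1, hv2⟩ := key
  have := congrArg (MvPolynomial.eval v) hR
  simp [hv1] at this
  exact hv2 (sub_eq_zero.mp this)

lemma prod_pairs_dvd (S : Finset ((_ : Fin n) × Fin n))
    (hS : ∀ q ∈ S, q.1 < q.2) (P : MvPolynomial (Fin n) K)
    (hdvd : ∀ q ∈ S, (X q.1 - X q.2) ∣ P) :
    (∏ q ∈ S, (X q.1 - X q.2)) ∣ P := by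
  classical
  induction S using Finset.induction_on generalizing P with
  | empty => simpa using one_dvd P
  | @insert q S hq ih =>
      have hq12 : q.1 < q.2 := hS q (mem_insert_self q S)
      obtain ⟨Q, rfl⟩ := hdvd q (mem_insert_self q S)
      rw [Finset.prod_insert hq]
      refine mul_dvd_mul_left _ (ih (fun r hr => hS r (mem_insert_of_mem hr)) Q ?_)
      intro r hr
      have hr12 : r.1 < r.2 := hS r (mem_insert_of_mem hr)
      have hprime := prime_X_sub_X (K := K) r.1 r.2 hr12.ne
      have hdr := hdvd r (mem_insert_of_mem hr)
      rcases hprime.2.2 _ _ hdr with h | h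
      · exfalso
        refine not_dvd_pair hr12 hq12 ?_ h
        intro hcontra
        apply hq
        have : r = q := by
          rcases r with ⟨r1, r2⟩; rcases q with ⟨q1, q2⟩
          simp only [Prod.mk.injEq] at hcontra
          simp [hcontra.1, hcontra.2]
        rwa [this] at hr
      · exact h

lemma collapse_C (a b : Fin n) (r : K) : collapse (K := K) a b (C r) = C r := by
  simp [collapse, MvPolynomial.algebraMap_eq]

/-- the alternant attached to an exponent vector `g`. -/
noncomputable def altPoly (e : Perm (Fin n) → K) (g : Fin n → ℕ) : MvPolynomial (Fin n) K :=
  ∑ σ : Perm (Fin n), C (e σ) * ∏ i, (X i) ^ (g (σ i))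

lemma collapse_altPoly (e : Perm (Fin n) → K)
    (he : ∀ σ τ, e (σ * τ) = ((Perm.sign τ : ℤ) : K) * e σ)
    (g : Fin n → ℕ) (a b : Fin n) (hab : a ≠ b) :
    collapse (K := K) a b (altPoly e g) = 0 := by
  rw [altPoly, map_sum]
  apply Finset.sum_ninvolution (g := fun σ => σ * Equiv.swap a b)
  · intro σ
    rw [map_mul, map_mul, map_prod, map_prod]
    have hmon : (∏ i, collapse (K := K) a b ((X i) ^ (g ((σ * Equiv.swap a b) i))))
        = ∏ i, collapse (K := K) a b ((X i) ^ (g (σ i))) := by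
      have hswap : ∀ i : Fin n, collapse (K := K) a b (X (Equiv.swap a b i))
          = collapse (K := K) a b (X i) := by
        intro i
        rcases eq_or_ne i a with rfl | hia
        · rw [Equiv.swap_apply_left, collapse_X, collapse_X, if_neg hab.symm, if_pos rfl]
        rcases eq_or_ne i b with rfl | hib
        · rw [Equiv.swap_apply_right, collapse_X, collapse_X, if_pos rfl, if_neg hab.symm]
        · rw [Equiv.swap_apply_of_ne_of_ne hia hib]
      calc (∏ i, collapse (K := K) a b ((X i) ^ (g ((σ * Equiv.swap a b) i))))
          = ∏ i, collapse (K := K) a b ((X (Equiv.swap a b i)) ^ (g (σ (Equiv.swap a b i)))) := by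
            refine Finset.prod_congr rfl fun i _ => ?_
            rw [map_pow, map_pow, hswap, Perm.mul_apply]
        _ = ∏ i, collapse (K := K) a b ((X i) ^ (g (σ i))) := by
            exact Equiv.prod_comp (Equiv.swap a b) fun i => collapse (K := K) a b ((X i) ^ (g (σ i)))
    rw [hmon, he σ (Equiv.swap a b), Perm.sign_swap hab]
    push_cast
    rw [collapse_C, collapse_C, neg_one_mul, map_neg]
    ring
  · intro σ _ h
    have h2 : σ b = σ a := by
      have := congrArg (fun τ : Perm (Fin n) => τ a) h
      simpa [Perm.mul_apply, Equiv.swap_apply_left] using this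
    exact hab (σ.injective h2).symm
  · intro σ; exact Finset.mem_univ _
  · intro σ
    rw [mul_assoc, Equiv.swap_mul_self, mul_one]


end SkewVdm

open SkewVdm in
/-- Let `G = C_p^k` with generators `x_1,…,x_k` and identify `𝔽_p[G]` with functions
`φ : 𝔽_p^k → 𝔽_p` via `s = ∑_γ φ(γ) x^γ`. If `s` is skew-symmetric
(i.e. `φ(γ∘σ⁻¹) = sgn(σ)·φ(γ)` for all permutations `σ`, and `φ(γ) = 0` whenever two
coordinates of `γ` coincide) and `(∏_{1≤i<j≤k}(x_i - x_j)) · s = 0`, then `s = 0`. -/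
theorem skew_symmetric_annihilator_vandermonde (p k : ℕ) (hp : p.Prime) [Fact p.Prime]
    (hk : k < p)
    (s : MonoidAlgebra (ZMod p) (Multiplicative (Fin k → ZMod p)))
    (hskew : ∀ (σ : Equiv.Perm (Fin k)) (γ : Fin k → ZMod p),
      s.coeff (Multiplicative.ofAdd (γ ∘ ⇑σ⁻¹)) =
        ((Equiv.Perm.sign σ : ℤ) : ZMod p) * s.coeff (Multiplicative.ofAdd γ))
    (halt : ∀ γ : Fin k → ZMod p, (∃ i j : Fin k, i ≠ j ∧ γ i = γ j) →
      s.coeff (Multiplicative.ofAdd γ) = 0)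
    (hann : (∏ i : Fin k, ∏ j ∈ Finset.Ioi i,
        ((MonoidAlgebra.of (ZMod p) (Multiplicative (Fin k → ZMod p))
            (Multiplicative.ofAdd (Pi.single i 1))) -
         (MonoidAlgebra.of (ZMod p) (Multiplicative (Fin k → ZMod p))
            (Multiplicative.ofAdd (Pi.single j 1))))) * s = 0) :
    s = 0 := by
  classical
  set x : Fin k → MonoidAlgebra (ZMod p) (Multiplicative (Fin k → ZMod p)) :=
    fun i => MonoidAlgebra.of (ZMod p) (Multiplicative (Fin k → ZMod p))
      (Multiplicative.ofAdd (Pi.single i 1)) with hx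
  set π : MvPolynomial (Fin k) (ZMod p) →ₐ[ZMod p]
      MonoidAlgebra (ZMod p) (Multiplicative (Fin k → ZMod p)) :=
    MvPolynomial.aeval x with hπ
  have key : ∀ γ : Fin k → ZMod p, s.coeff (Multiplicative.ofAdd (-γ)) = 0 := by
    intro γ
    set e : Perm (Fin k) → ZMod p := fun σ => ((Perm.sign σ : ℤ) : ZMod p) with he_def
    have he : ∀ σ τ : Perm (Fin k), e (σ * τ) = ((Perm.sign τ : ℤ) : ZMod p) * e σ := by
      intro σ τ
      simp only [he_def, Perm.sign_mul]
      push_cast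
      ring
    set g : Fin k → ℕ := fun i => (γ i).val with hg
    set S : Finset ((_ : Fin k) × Fin k) := Finset.univ.sigma (fun i => Finset.Ioi i) with hS
    have hSlt : ∀ q ∈ S, q.1 < q.2 := by
      intro q hq
      rw [hS, Finset.mem_sigma] at hq
      exact Finset.mem_Ioi.mp hq.2
    have hdvd : ∀ q ∈ S, (X q.1 - X q.2) ∣ altPoly e g := by
      intro q hq
      have hne := (hSlt q hq).ne
      exact (X_sub_X_dvd_iff q.1 q.2 hne _).mpr (collapse_altPoly e he g q.1 q.2 hne)
    obtain ⟨Q, hQ⟩ := prod_pairs_dvd S hSlt (altPoly e g) hdvd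
    have hπalt : s * π (altPoly e g) = 0 := by
      have hVP : π (∏ q ∈ S, (X q.fst - X q.snd))
          = ∏ i : Fin k, ∏ j ∈ Finset.Ioi i, (x i - x j) := by
        rw [hS, map_prod]
        rw [Finset.prod_congr rfl fun (q : (_ : Fin k) × Fin k) _ =>
          (by rw [map_sub, hπ, MvPolynomial.aeval_X, MvPolynomial.aeval_X] :
            π (X q.fst - X q.snd) = x q.fst - x q.snd)]
        exact (Finset.prod_sigma' Finset.univ (fun i => Finset.Ioi i)
          (fun i j => x i - x j)).symm
      have h0 : (∏ i : Fin k, ∏ j ∈ Finset.Ioi i, (x i - x j)) * s = 0 := hann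
      rw [hQ, map_mul, hVP]
      calc (s * ((∏ i : Fin k, ∏ j ∈ Finset.Ioi i, (x i - x j)) * π Q))
          = ((∏ i : Fin k, ∏ j ∈ Finset.Ioi i, (x i - x j)) * s) * π Q := by ring
        _ = 0 := by rw [h0, zero_mul]
    have hmon : ∀ σ : Perm (Fin k), π (∏ i, (X i : MvPolynomial (Fin k) (ZMod p)) ^ (g (σ i)))
        = MonoidAlgebra.of (ZMod p) (Multiplicative (Fin k → ZMod p))
            (Multiplicative.ofAdd (γ ∘ σ)) := by
      intro σ
      rw [map_prod]
      have hXpow : ∀ i : Fin k, π ((X i : MvPolynomial (Fin k) (ZMod p)) ^ (g (σ i)))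
          = MonoidAlgebra.of (ZMod p) (Multiplicative (Fin k → ZMod p))
              (Multiplicative.ofAdd (Pi.single i (γ (σ i)))) := by
        intro i
        rw [map_pow, hπ, MvPolynomial.aeval_X, hx]
        rw [← map_pow (MonoidAlgebra.of (ZMod p) (Multiplicative (Fin k → ZMod p)))]
        congr 1
        rw [← ofAdd_nsmul]
        congr 1
        have h1 : (g (σ i)) • (Pi.single i (1 : ZMod p) : Fin k → ZMod p)
            = (Pi.single i (((g (σ i) : ℕ) : ZMod p)) : Fin k → ZMod p) := by
          rw [← Pi.single_smul]
          congr 1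
          rw [nsmul_eq_mul, mul_one]
        rw [h1]
        exact congrArg (fun c : ZMod p => (Pi.single i c : Fin k → ZMod p))
          (ZMod.natCast_zmod_val (γ (σ i)))
      rw [Finset.prod_congr rfl fun i _ => hXpow i]
      rw [← map_prod (MonoidAlgebra.of (ZMod p) (Multiplicative (Fin k → ZMod p)))]
      congr 1
      rw [← ofAdd_sum]
      congr 1
      exact Finset.univ_sum_single (γ ∘ σ)
    have hπalt2 : π (altPoly e g)
        = ∑ σ : Perm (Fin k),
            MonoidAlgebra.single (Multiplicative.ofAdd (γ ∘ σ)) (e σ) := by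
      rw [altPoly, map_sum]
      refine Finset.sum_congr rfl fun σ _ => ?_
      rw [map_mul, hmon σ]
      rw [MonoidAlgebra.single_eq_algebraMap_mul_of]
      congr 1
      simp [hπ, MvPolynomial.aeval_C]
    have happ : (s * π (altPoly e g)).coeff (1 : Multiplicative (Fin k → ZMod p)) = 0 := by
      rw [hπalt]
      rfl
    rw [hπalt2, Finset.mul_sum, MonoidAlgebra.coeff_sum, Finsupp.finset_sum_apply] at happ
    have hterm : ∀ σ : Perm (Fin k),
        (s * MonoidAlgebra.single (Multiplicative.ofAdd (γ ∘ σ)) (e σ)).coeff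
            (1 : Multiplicative (Fin k → ZMod p))
          = s.coeff (Multiplicative.ofAdd (-γ)) := by
      intro σ
      rw [MonoidAlgebra.mul_single_apply, one_mul]
      have hinv : (Multiplicative.ofAdd (γ ∘ σ))⁻¹
          = Multiplicative.ofAdd ((-γ) ∘ ⇑((σ⁻¹)⁻¹)) := by
        rw [← ofAdd_neg]
        congr 1
        try (funext j; simp)
      have hee : e σ = ((Perm.sign σ : ℤ) : ZMod p) := rfl
      rw [hinv, hskew σ⁻¹ (-γ), Perm.sign_inv, hee]
      rcases Int.units_eq_one_or (Perm.sign σ) with h | h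
      · rw [h]; push_cast; try ring
      · rw [h]; push_cast; try ring
    rw [Finset.sum_congr rfl fun σ _ => hterm σ, Finset.sum_const, Finset.card_univ,
      Fintype.card_perm, Fintype.card_fin] at happ
    have hfac : ((k.factorial : ZMod p)) ≠ 0 := by
      rw [Ne, ZMod.natCast_eq_zero_iff]
      intro hdvd2
      exact absurd ((Nat.Prime.dvd_factorial hp).mp hdvd2) (not_le.mpr hk)
    rw [nsmul_eq_mul] at happ
    rcases mul_eq_zero.mp happ with h | h
    · exact absurd h hfac
    · exact h
  refine MonoidAlgebra.ext (Finsupp.ext fun m => ?_)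
  have h2 := key (-(Multiplicative.toAdd m))
  rw [neg_neg] at h2
  simpa using h2
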